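/- Let (M,P,T) be a Rota-Baxter paired left C-comodule of weight λ with coaction ρ, and set P̄ = -P - λ·id_C and T̄ = -T - λ·id_M. Then for all m ∈ M (writing ρ(m) = m₍₋₁₎ ⊗ m₍₀₎): (i) P(m₍₋₁₎) ⊗ T̄(m₍₀₎) = T(m)₍₋₁₎ ⊗ T̄(T(m)₍₀₎) + P(T̄(m)₍₋₁₎) ⊗ T̄(m)₍₀₎, and (ii) P̄(m₍₋₁₎) ⊗ T(m₍₀₎) = P̄(T(m)₍₋₁₎) ⊗ T(m)₍₀₎ + T̄(m)₍₋₁₎ ⊗ T(T̄(m)₍₀₎). -/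

import Mathlib

open TensorProduct

/-- The Rota-Baxter paired left comodule condition of weight `lam`. -/
def RBPairedComodule {k C M : Type*} [Field k] [AddCommGroup C] [Module k C]
    [AddCommGroup M] [Module k M] (ρ : M →ₗ[k] C ⊗[k] M)
    (P : C →ₗ[k] C) (T : M →ₗ[k] M) (lam : k) : Prop :=
  TensorProduct.map P T ∘ₗ ρ =
    TensorProduct.map P LinearMap.id ∘ₗ ρ ∘ₗ T +
      TensorProduct.map LinearMap.id T ∘ₗ ρ ∘ₗ T + lam • (ρ ∘ₗ T)


lemma mapL {k C M : Type*} [Field k] [AddCommGroup C] [Module k C]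
    [AddCommGroup M] [Module k M] (P : C →ₗ[k] C) (T : M →ₗ[k] M) (r : k) :
    TensorProduct.map (-P - r • LinearMap.id) T =
      -(TensorProduct.map P T) - r • TensorProduct.map LinearMap.id T := by
  rw [sub_eq_add_neg, ← neg_one_smul k P, ← neg_one_smul k (r • (LinearMap.id : C →ₗ[k] C)),
    TensorProduct.map_add_left, TensorProduct.map_smul_left, TensorProduct.map_smul_left,
    TensorProduct.map_smul_left]
  module

lemma mapR {k C M : Type*} [Field k] [AddCommGroup C] [Module k C]
    [AddCommGroup M] [Module k M] (P : C →ₗ[k] C) (T : M →ₗ[k] M) (r : k) :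
    TensorProduct.map P (-T - r • LinearMap.id) =
      -(TensorProduct.map P T) - r • TensorProduct.map P LinearMap.id := by
  rw [sub_eq_add_neg, ← neg_one_smul k T, ← neg_one_smul k (r • (LinearMap.id : M →ₗ[k] M)),
    TensorProduct.map_add_right, TensorProduct.map_smul_right, TensorProduct.map_smul_right,
    TensorProduct.map_smul_right]
  module

theorem stmt3 {k C M : Type*} [Field k] [AddCommGroup C] [Module k C] [Coalgebra k C]
    [AddCommGroup M] [Module k M] (ρ : M →ₗ[k] C ⊗[k] M)
    -- `M` is a left `C`-comodule:
    (hcoassoc : (TensorProduct.assoc k C C M).toLinearMap ∘ₗ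
        TensorProduct.map Coalgebra.comul LinearMap.id ∘ₗ ρ =
        TensorProduct.map LinearMap.id ρ ∘ₗ ρ)
    (hcounit : (TensorProduct.lid k M).toLinearMap ∘ₗ
        TensorProduct.map Coalgebra.counit LinearMap.id ∘ₗ ρ = LinearMap.id)
    (lam : k) (P : C →ₗ[k] C) (T : M →ₗ[k] M)
    (hRB : RBPairedComodule ρ P T lam)
    (Pbar : C →ₗ[k] C) (hPbar : Pbar = -P - lam • LinearMap.id)
    (Tbar : M →ₗ[k] M) (hTbar : Tbar = -T - lam • LinearMap.id) :
    ∀ m : M,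
      -- (i) `P(m₋₁) ⊗ T̄(m₀) = T(m)₋₁ ⊗ T̄(T(m)₀) + P(T̄(m)₋₁) ⊗ T̄(m)₀`
      (TensorProduct.map P Tbar (ρ m) =
        TensorProduct.map LinearMap.id Tbar (ρ (T m)) +
          TensorProduct.map P LinearMap.id (ρ (Tbar m))) ∧
      -- (ii) `P̄(m₋₁) ⊗ T(m₀) = P̄(T(m)₋₁) ⊗ T(m)₀ + T̄(m)₋₁ ⊗ T(T̄(m)₀)`
      (TensorProduct.map Pbar T (ρ m) =
        TensorProduct.map Pbar LinearMap.id (ρ (T m)) +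
          TensorProduct.map LinearMap.id T (ρ (Tbar m))) := by
  subst hPbar hTbar
  unfold RBPairedComodule at hRB
  intro m
  have h := LinearMap.congr_fun hRB m
  simp only [LinearMap.add_apply, LinearMap.comp_apply, LinearMap.smul_apply] at h
  constructor <;>
  · simp only [_root_.mapL, mapR, LinearMap.sub_apply, LinearMap.neg_apply, LinearMap.smul_apply,
      map_sub, map_neg, map_smul, TensorProduct.map_id, LinearMap.id_coe, id_eq]
    rw [h]
    module
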